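/- arXiv:1311.5872 — 8 statements merged into one kernel-verified Lean document; each statement's English description precedes it below -/
import Mathlib

section
/- In the Tits triple algebra A over a field k, the adjoint identity (a#)# = N(a)·a holds for every a ∈ A. -/
open Matrix

noncomputable section

/-- The Tits triple algebra `A = Mat₃(k) × Mat₃(k) × Mat₃(k)` (First Tits Construction
from `Mat₃(k)` with `ν = 1`). -/
abbrev TitsA (k : Type*) [Field k] :=
  Matrix (Fin 3) (Fin 3) k × Matrix (Fin 3) (Fin 3) k × Matrix (Fin 3) (Fin 3) k

variable {k : Type*} [Field k]

/-- Base point `e = (1,0,0)`. -/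
def TitsA.e : TitsA k := (1, 0, 0)

/-- Trace `Tr(a) = tr a₀`. -/
def TitsA.Tr (a : TitsA k) : k := a.1.trace

/-- Norm `N(a) = det a₀ + det a₁ + det a₂ − tr(a₀a₁a₂)`. -/
def TitsA.N (a : TitsA k) : k := a.1.det + a.2.1.det + a.2.2.det - (a.1 * a.2.1 * a.2.2).trace

/-- Sharp map `a# = (adj a₀ − a₁a₂, adj a₂ − a₀a₁, adj a₁ − a₂a₀)`. -/
def TitsA.sharp (a : TitsA k) : TitsA k :=
  (a.1.adjugate - a.2.1 * a.2.2, a.2.2.adjugate - a.1 * a.2.1, a.2.1.adjugate - a.2.2 * a.1)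

/-- Bilinearized sharp `x # y = (x+y)# − x# − y#`. -/
def TitsA.sharpBil (x y : TitsA k) : TitsA k :=
  TitsA.sharp (x + y) - TitsA.sharp x - TitsA.sharp y

/-- Linearized quadratic trace `Sr(x,y) = tr((x#y)₀)`. -/
def TitsA.Sr (x y : TitsA k) : k := (TitsA.sharpBil x y).1.trace

/-- The Jordan product `x∘y = ½(x#y + Tr(x)y + Tr(y)x − Sr(x,y)e)`. -/
def TitsA.jmul (x y : TitsA k) : TitsA k :=
  (2⁻¹ : k) • (TitsA.sharpBil x y + TitsA.Tr x • y + TitsA.Tr y • x - TitsA.Sr x y • TitsA.e)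

/-- The map `f_{uv}(a₀,a₁,a₂) = (u a₀ u⁻¹, u a₁ v⁻¹, v a₂ u⁻¹)`. -/
def TitsA.fUV (u v : Matrix (Fin 3) (Fin 3) k) (a : TitsA k) : TitsA k :=
  (u * a.1 * u⁻¹, u * a.2.1 * v⁻¹, v * a.2.2 * u⁻¹)


set_option maxHeartbeats 4000000 in
/-- the adjoint identity `(a#)# = N(a)·a` holds in the Tits triple algebra. -/
theorem TitsA.sharp_sharp (k : Type*) [Field k] (a : TitsA k) :
    TitsA.sharp (TitsA.sharp a) = TitsA.N a • a := by
  obtain ⟨a0, a1, a2⟩ := a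
  simp only [TitsA.sharp, TitsA.N, Prod.smul_mk, Prod.mk.injEq]
  refine ⟨?_, ?_, ?_⟩ <;>
  · ext i j
    fin_cases i <;> fin_cases j <;>
      · simp [Matrix.adjugate_fin_three, Matrix.det_fin_three, Matrix.mul_apply,
          Fin.sum_univ_three, Matrix.trace_fin_three, Matrix.sub_apply, Matrix.smul_apply]
        ring

end
end

section
/- Let k be a field and let u,v be invertible 3×3 matrices over k with det u = det v = 1. Then the map f_{uv} preserves the norm of the Tits triple algebra: N(f_{uv}(a)) = N(a) for all a ∈ A, and f_{uv}(e) = e. -/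
open Matrix

noncomputable section

variable {k : Type*} [Field k]

/-- for `u, v` invertible with `det u = det v = 1`, the map `f_{uv}` preserves
the norm `N` of the Tits triple algebra and fixes the base point `e`. -/
theorem TitsA.fUV_norm_preserving (k : Type*) [Field k]
    (u v : Matrix (Fin 3) (Fin 3) k) (hu : IsUnit u) (hv : IsUnit v)
    (hdu : u.det = 1) (hdv : v.det = 1) :
    (∀ a : TitsA k, TitsA.N (TitsA.fUV u v a) = TitsA.N a) ∧
      TitsA.fUV u v TitsA.e = TitsA.e := by
  have huu : u * u⁻¹ = 1 := Matrix.mul_nonsing_inv u (isUnit_iff_isUnit_det u |>.mp hu)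
  have huu' : u⁻¹ * u = 1 := Matrix.nonsing_inv_mul u (isUnit_iff_isUnit_det u |>.mp hu)
  have hvv' : v⁻¹ * v = 1 := Matrix.nonsing_inv_mul v (isUnit_iff_isUnit_det v |>.mp hv)
  have hdui : u⁻¹.det = 1 := by rw [Matrix.det_nonsing_inv, hdu, Ring.inverse_one]
  have hdvi : v⁻¹.det = 1 := by rw [Matrix.det_nonsing_inv, hdv, Ring.inverse_one]
  constructor
  · rintro ⟨a₀, a₁, a₂⟩
    simp only [TitsA.N, TitsA.fUV, Matrix.det_mul, hdu, hdv, hdui, hdvi]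
    have htr : (u * a₀ * u⁻¹ * (u * a₁ * v⁻¹) * (v * a₂ * u⁻¹)).trace =
        (a₀ * a₁ * a₂).trace := by
      have h1 : u * a₀ * u⁻¹ * (u * a₁ * v⁻¹) * (v * a₂ * u⁻¹) =
          u * a₀ * a₁ * a₂ * u⁻¹ := by
        simp only [Matrix.mul_assoc, ← Matrix.mul_assoc u⁻¹ u, ← Matrix.mul_assoc v⁻¹ v,
          huu', hvv', Matrix.one_mul]
      rw [h1, Matrix.trace_mul_comm, ← Matrix.mul_assoc, ← Matrix.mul_assoc,
        ← Matrix.mul_assoc, huu', Matrix.one_mul]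
    rw [htr]
    ring
  · simp only [TitsA.fUV, TitsA.e, Matrix.mul_one, Matrix.mul_zero, Matrix.zero_mul, huu]

end
end

section
/- Let k be a field and let u,v be invertible 3×3 matrices over k with det u = det v = 1. Then the map f_{uv} commutes with the sharp map of the Tits triple algebra: f_{uv}(a#) = (f_{uv}(a))# for all a ∈ A. -/
open Matrix

noncomputable section

variable {k : Type*} [Field k]

/-- for `u, v` invertible with `det u = det v = 1`, the map `f_{uv}` commutes
with the sharp map of the Tits triple algebra. -/
theorem TitsA.fUV_sharp (k : Type*) [Field k]
    (u v : Matrix (Fin 3) (Fin 3) k) (hu : IsUnit u) (hv : IsUnit v)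
    (hdu : u.det = 1) (hdv : v.det = 1) (a : TitsA k) :
    TitsA.fUV u v (TitsA.sharp a) = TitsA.sharp (TitsA.fUV u v a) := by
  have hadj : ∀ w : Matrix (Fin 3) (Fin 3) k, w.det = 1 → w.adjugate = w⁻¹ := by
    intro w h; simp [Matrix.inv_def, h]
  have hdu' : (u⁻¹).det = 1 := by simp [Matrix.det_nonsing_inv, hdu]
  have hdv' : (v⁻¹).det = 1 := by simp [Matrix.det_nonsing_inv, hdv]
  have hvu : v⁻¹ * v = 1 := Matrix.nonsing_inv_mul v (by simp [hdv])
  have huu : u⁻¹ * u = 1 := Matrix.nonsing_inv_mul u (by simp [hdu])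
  have hvu2 : ∀ x : Matrix (Fin 3) (Fin 3) k, v⁻¹ * (v * x) = x := fun x => by
    rw [← mul_assoc, hvu, one_mul]
  have huu2 : ∀ x : Matrix (Fin 3) (Fin 3) k, u⁻¹ * (u * x) = x := fun x => by
    rw [← mul_assoc, huu, one_mul]
  simp only [TitsA.fUV, TitsA.sharp, Matrix.adjugate_mul_distrib,
    hadj u hdu, hadj v hdv, hadj u⁻¹ hdu', hadj v⁻¹ hdv',
    Matrix.nonsing_inv_nonsing_inv u (by simp [hdu]),
    Matrix.nonsing_inv_nonsing_inv v (by simp [hdv])]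
  refine Prod.ext ?_ (Prod.ext ?_ ?_) <;> simp only [Matrix.mul_sub, Matrix.sub_mul] <;>
    congr 1 <;>
    simp [mul_assoc, hvu2, huu2]

end
end

section
/- Let k be a field and let u,v be invertible 3×3 matrices over k. If the map f_{uv} preserves the norm of the Tits triple algebra, i.e. N(f_{uv}(a)) = N(a) for all a ∈ A, then det u = det v. -/
open Matrix

noncomputable section

variable {k : Type*} [Field k]

/-- if `f_{uv}` (for invertible `u, v`) preserves the norm of the Tits triple
algebra, then `det u = det v`. -/
theorem TitsA.det_eq_of_fUV_norm_preserving (k : Type*) [Field k]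
    (u v : Matrix (Fin 3) (Fin 3) k) (hu : IsUnit u) (hv : IsUnit v)
    (hN : ∀ a : TitsA k, TitsA.N (TitsA.fUV u v a) = TitsA.N a) :
    u.det = v.det := by
  have h := hN ((0, 1, 0) : TitsA k)
  simp [TitsA.N, TitsA.fUV, Matrix.trace, Matrix.det_nonsing_inv] at h
  have hv' : v.det ≠ 0 := by
    simpa using (Matrix.isUnit_iff_isUnit_det v).mp hv |>.ne_zero
  field_simp at h
  exact h

end
end

section
/- Let k be a field with char k ≠ 2 and let a, b, c, d ∈ k be nonzero. If there exists a k-linear bijection φ : ℍ[k,a,b] → ℍ[k,c,d] that preserves norm forms, i.e. N_{c,d}(φ(x)) = N_{a,b}(x) for all x, then ℍ[k,a,b] and ℍ[k,c,d] are isomorphic as k-algebras. (A quaternion algebra is completely determined by its quadratic norm form.) -/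
/-!
Composing `φ` with one or two reflections of the norm form gives an isometry `Φ` with `Φ 1 = 1`.
Such an isometry preserves the polar form, hence the real part, so `I := Φ i` and `J := Φ j` are
pure quaternions with `I² = a`, `J² = b` and `IJ = -JI`: they define an algebra map
`ℍ[k, a, b] → ℍ[k, c, d]`. It sends `1, i, j, ij` to the family `1, I, J, IJ`, which is orthogonal
with nonzero norms `1, -a, -b, ab`, so it is injective, hence bijective by dimension count.
-/

open Quaternion

/-- The norm form of the quaternion algebra `ℍ[k, c₁, c₂]`. -/
def quatNorm {k : Type*} [Field k] {c₁ c₂ : k} (x : ℍ[k, c₁, c₂]) : k :=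
  x.re ^ 2 - c₁ * x.imI ^ 2 - c₂ * x.imJ ^ 2 + c₁ * c₂ * x.imK ^ 2

namespace QuadraticMap.Isometry

variable {R M₁ M₂ N : Type*} [CommSemiring R] [AddCommGroup M₁] [AddCommGroup M₂]
  [AddCommGroup N] [Module R M₁] [Module R M₂] [Module R N]
  {Q₁ : QuadraticMap R M₁ N} {Q₂ : QuadraticMap R M₂ N}

theorem map_polar (f : Q₁ →qᵢ Q₂) (x y : M₁) : polar Q₂ (f x) (f y) = polar Q₁ x y := by
  simp only [polar, ← map_add, map_app]

end QuadraticMap.Isometry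

namespace QuadraticMap

variable {k V : Type*} [Field k] [AddCommGroup V] [Module k V] {Q : QuadraticForm k V}

def reflection (w : V) (hw : Q w ≠ 0) : Q →qᵢ Q where
  toLinearMap := Module.preReflection w ((Q w)⁻¹ • polarBilin Q w)
  map_app' y := by
    have hpol : polar Q y w = polar Q w y := polar_comm _ _ _
    simp only [LinearMap.toFun_eq_coe, Module.preReflection_apply, LinearMap.smul_apply,
      polarBilin_apply_apply, smul_eq_mul, sub_eq_add_neg, ← neg_smul, QuadraticMap.map_add Q,
      QuadraticMap.map_smul, polar_smul_right, hpol]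
    field_simp
    ring

theorem reflection_apply {w : V} (hw : Q w ≠ 0) (y : V) :
    reflection w hw y = y - (polar Q w y / Q w) • w := by
  change Module.preReflection w _ y = _
  simp [Module.preReflection_apply, div_eq_inv_mul]

theorem reflection_apply_of_polar_eq {w u : V} (hw : Q w ≠ 0) (h : polar Q w u = Q w) :
    reflection w hw u = u - w := by
  rw [reflection_apply, h, div_self hw, one_smul]

theorem reflection_apply_self {w : V} (hw : Q w ≠ 0) : reflection w hw w = -w := by
  rw [reflection_apply, polar_self, nsmul_eq_mul, Nat.cast_ofNat, mul_div_cancel_right₀ _ hw,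
    two_smul]
  abel

/-- Reflect in `u - v`; if that vector is isotropic, then `Q (u + v) = 4 * Q v ≠ 0`, and the
reflection in `u + v` followed by the one in `v` does the job. -/
theorem exists_isometry_apply_eq (h2 : (2 : k) ≠ 0) {u v : V} (huv : Q u = Q v) (hv : Q v ≠ 0) :
    ∃ g : Q →qᵢ Q, g u = v := by
  have hsub : Q (u - v) = 2 * Q v - polar Q u v := by
    rw [sub_eq_add_neg, QuadraticMap.map_add Q, QuadraticMap.map_neg, polar_neg_right, huv]; ring
  have hadd : Q (u + v) = 2 * Q v + polar Q u v := by
    rw [QuadraticMap.map_add Q, huv]; ring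
  by_cases h : Q (u - v) = 0
  · have hw : Q (u + v) ≠ 0 := by
      rw [hadd, show polar Q u v = 2 * Q v by linear_combination hsub - h]
      exact fun h4 ↦ mul_ne_zero (mul_ne_zero h2 h2) hv (by linear_combination h4)
    refine ⟨(reflection v hv).comp (reflection (u + v) hw), ?_⟩
    have : polar Q (u + v) u = Q (u + v) := by
      rw [polar_add_left, polar_self, polar_comm, hadd, huv, nsmul_eq_mul]; push_cast; ring
    rw [Isometry.comp_apply, reflection_apply_of_polar_eq hw this, sub_add_cancel_left,
      map_neg, reflection_apply_self, neg_neg]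
  · refine ⟨reflection (u - v) h, reflection_apply_of_polar_eq h ?_ |>.trans (sub_sub_cancel u v)⟩
    rw [polar_sub_left, polar_self, polar_comm, hsub, huv, nsmul_eq_mul]; push_cast; ring

end QuadraticMap

open QuadraticMap

namespace QuaternionAlgebra

variable {k : Type*} [Field k] {c₁ c₂ : k}

variable (c₁ c₂) in
def normForm : QuadraticForm k ℍ[k, c₁, c₂] :=
  (weightedSumSquares k ![1, -c₁, -c₂, c₁ * c₂]).comp (linearEquivTuple c₁ 0 c₂).toLinearMap

theorem normForm_apply (x : ℍ[k, c₁, c₂]) : normForm c₁ c₂ x = quatNorm x := by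
  simp only [normForm, QuadraticMap.comp_apply, LinearEquiv.coe_coe, coe_linearEquivTuple,
    equivTuple_apply, weightedSumSquares_apply, smul_eq_mul, Fin.sum_univ_four, Matrix.cons_val,
    quatNorm]
  ring

theorem normForm_one : normForm c₁ c₂ 1 = 1 := by
  simp [normForm_apply, quatNorm]

theorem polar_normForm (x y : ℍ[k, c₁, c₂]) :
    polar (normForm c₁ c₂) x y =
      2 * (x.re * y.re - c₁ * x.imI * y.imI - c₂ * x.imJ * y.imJ + c₁ * c₂ * x.imK * y.imK) := by
  simp only [polar, normForm_apply, quatNorm, re_add, imI_add, imJ_add, imK_add]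
  ring

theorem polar_normForm_one (x : ℍ[k, c₁, c₂]) : polar (normForm c₁ c₂) x 1 = 2 * x.re := by
  simp [polar_normForm]

theorem normForm_mul (x y : ℍ[k, c₁, c₂]) :
    normForm c₁ c₂ (x * y) = normForm c₁ c₂ x * normForm c₁ c₂ y := by
  simp only [normForm_apply, quatNorm, re_mul, imI_mul, imJ_mul, imK_mul]
  ring

theorem polar_normForm_mul_self_left (x y : ℍ[k, c₁, c₂]) :
    polar (normForm c₁ c₂) (x * y) x = 2 * normForm c₁ c₂ x * y.re := by
  simp only [polar_normForm, normForm_apply, quatNorm, re_mul, imI_mul, imJ_mul, imK_mul]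
  ring

theorem polar_normForm_mul_self_right (x y : ℍ[k, c₁, c₂]) :
    polar (normForm c₁ c₂) (x * y) y = 2 * normForm c₁ c₂ y * x.re := by
  simp only [polar_normForm, normForm_apply, quatNorm, re_mul, imI_mul, imJ_mul, imK_mul]
  ring

theorem mul_self_of_re_eq_zero {x : ℍ[k, c₁, c₂]} (hx : x.re = 0) :
    x * x = (-normForm c₁ c₂ x) • 1 := by
  ext <;>
    simp only [normForm_apply, quatNorm, re_mul, imI_mul, imJ_mul, imK_mul, re_smul, imI_smul,
      imJ_smul, imK_smul, re_one, imI_one, imJ_one, imK_one, smul_eq_mul, hx] <;>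
    ring

theorem mul_add_mul_swap_of_re_eq_zero {x y : ℍ[k, c₁, c₂]} (hx : x.re = 0) (hy : y.re = 0) :
    x * y + y * x = (-polar (normForm c₁ c₂) x y) • 1 := by
  ext <;>
    simp only [polar_normForm, re_add, imI_add, imJ_add, imK_add, re_mul, imI_mul, imJ_mul,
      imK_mul, re_smul, imI_smul, imJ_smul, imK_smul, re_one, imI_one, imJ_one, imK_one,
      smul_eq_mul, hx, hy] <;>
    ring

theorem two_mul_re_mul_of_re_eq_zero {x y : ℍ[k, c₁, c₂]} (hx : x.re = 0) (hy : y.re = 0) :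
    2 * (x * y).re = -polar (normForm c₁ c₂) x y := by
  simp only [polar_normForm, re_mul, hx, hy]
  ring

theorem linearIndependent_one_x_y_mul (h2 : (2 : k) ≠ 0) {x y : ℍ[k, c₁, c₂]} (hx : x.re = 0)
    (hy : y.re = 0) (hxy : polar (normForm c₁ c₂) x y = 0) (hQx : normForm c₁ c₂ x ≠ 0)
    (hQy : normForm c₁ c₂ y ≠ 0) : LinearIndependent k ![1, x, y, x * y] := by
  refine LinearMap.BilinForm.linearIndependent_of_iIsOrtho (B := polarBilin (normForm c₁ c₂)) ?_ ?_
  · have hxy_re : (x * y).re = 0 := by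
      have := two_mul_re_mul_of_re_eq_zero hx hy
      rw [hxy, neg_zero] at this
      exact (mul_eq_zero.mp this).resolve_left h2
    have h1x : polar (normForm c₁ c₂) 1 x = 0 := by
      rw [polar_comm, polar_normForm_one, hx, mul_zero]
    have h1y : polar (normForm c₁ c₂) 1 y = 0 := by
      rw [polar_comm, polar_normForm_one, hy, mul_zero]
    have h1xy : polar (normForm c₁ c₂) 1 (x * y) = 0 := by
      rw [polar_comm, polar_normForm_one, hxy_re, mul_zero]
    have hx_xy : polar (normForm c₁ c₂) x (x * y) = 0 := by
      rw [polar_comm, polar_normForm_mul_self_left, hy, mul_zero]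
    have hy_xy : polar (normForm c₁ c₂) y (x * y) = 0 := by
      rw [polar_comm, polar_normForm_mul_self_right, hx, mul_zero]
    intro m n hmn
    change polar (normForm c₁ c₂) _ _ = 0
    wlog hlt : m < n generalizing m n
    · exact (polar_comm _ _ _).trans (this hmn.symm (by omega))
    fin_cases m <;> fin_cases n <;> simp [h1x, h1y, h1xy, hxy, hx_xy, hy_xy] at hlt ⊢
  · intro n
    fin_cases n <;> simp [polar_self, normForm_mul, normForm_one, h2, hQx, hQy]

variable {a b c d : k}

theorem re_isometry_apply (h2 : (2 : k) ≠ 0) {Φ : normForm a b →qᵢ normForm c d} (h1 : Φ 1 = 1)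
    (x : ℍ[k, a, b]) : (Φ x).re = x.re := by
  have := Φ.map_polar x 1
  rw [h1, polar_normForm_one, polar_normForm_one] at this
  exact mul_left_cancel₀ h2 this

/-- `ℍ[k, a, b]` is `ℍ[k, a, 0, b]`, hence the parameters `a 0 b` of the basis. -/
def Basis.ofIsometry (h2 : (2 : k) ≠ 0) {Φ : normForm a b →qᵢ normForm c d} (h1 : Φ 1 = 1) :
    Basis ℍ[k, c, d] a 0 b where
  i := Φ ⟨0, 1, 0, 0⟩
  j := Φ ⟨0, 0, 1, 0⟩
  k := Φ ⟨0, 1, 0, 0⟩ * Φ ⟨0, 0, 1, 0⟩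
  i_mul_i := by
    rw [mul_self_of_re_eq_zero (re_isometry_apply h2 h1 _), Φ.map_app]
    simp [normForm_apply, quatNorm]
  j_mul_j := by
    rw [mul_self_of_re_eq_zero (re_isometry_apply h2 h1 _), Φ.map_app]
    simp [normForm_apply, quatNorm]
  i_mul_j := rfl
  j_mul_i := by
    have hij : Φ ⟨0, 1, 0, 0⟩ * Φ ⟨0, 0, 1, 0⟩ + Φ ⟨0, 0, 1, 0⟩ * Φ ⟨0, 1, 0, 0⟩ = 0 := by
      rw [mul_add_mul_swap_of_re_eq_zero (re_isometry_apply h2 h1 _) (re_isometry_apply h2 h1 _),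
        Φ.map_polar]
      simp [polar_normForm]
    rw [zero_smul, zero_sub, eq_neg_iff_add_eq_zero, add_comm, hij]

theorem Basis.ofIsometry_liftHom_bijective (h2 : (2 : k) ≠ 0) (ha : a ≠ 0) (hb : b ≠ 0)
    {Φ : normForm a b →qᵢ normForm c d} (h1 : Φ 1 = 1) :
    Function.Bijective (ofIsometry h2 h1).liftHom := by
  set f := (ofIsometry h2 h1).liftHom.toLinearMap
  have hbasis : f ∘ basisOneIJK a 0 b = ![1, Φ ⟨0, 1, 0, 0⟩, Φ ⟨0, 0, 1, 0⟩,
      Φ ⟨0, 1, 0, 0⟩ * Φ ⟨0, 0, 1, 0⟩] := by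
    ext n : 1
    fin_cases n <;> simp [f, basisOneIJK, ofIsometry, Basis.lift]
  have hinj : Function.Injective f := by
    refine LinearMap.injective_of_linearIndependent (basisOneIJK a 0 b).span_eq ?_
    rw [hbasis]
    refine linearIndependent_one_x_y_mul h2 (re_isometry_apply h2 h1 _) (re_isometry_apply h2 h1 _)
      ?_ ?_ ?_
    · simp [Φ.map_polar, polar_normForm]
    · simp [Φ.map_app, normForm_apply, quatNorm, ha]
    · simp [Φ.map_app, normForm_apply, quatNorm, hb]
  have hsurj : Function.Surjective f :=
    (LinearMap.injective_iff_surjective_of_finrank_eq_finrank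
      (by rw [finrank_eq_four, finrank_eq_four])).mp hinj
  exact ⟨hinj, hsurj⟩

end QuaternionAlgebra

open QuaternionAlgebra in
theorem quaternionAlgebra_det_by_norm_general (k : Type*) [Field k] (hchar : (2 : k) ≠ 0)
    (a b c d : k) (ha : a ≠ 0) (hb : b ≠ 0)
    (φ : ℍ[k, a, b] ≃ₗ[k] ℍ[k, c, d])
    (hφ : ∀ x : ℍ[k, a, b], quatNorm (φ x) = quatNorm x) :
    Nonempty (ℍ[k, a, b] ≃ₐ[k] ℍ[k, c, d]) := by
  let ψ : normForm a b →qᵢ normForm c d :=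
    { φ.toLinearMap with map_app' := by simpa [normForm_apply] using hφ }
  obtain ⟨g, hg⟩ := exists_isometry_apply_eq hchar (u := ψ 1) (v := 1)
    (by rw [ψ.map_app, normForm_one, normForm_one]) (by rw [normForm_one]; exact one_ne_zero)
  exact ⟨.ofBijective _ (Basis.ofIsometry_liftHom_bijective hchar ha hb (Φ := g.comp ψ) hg)⟩

/-- over a field of characteristic ≠ 2, a quaternion algebra is completely
determined by its norm form: a norm-preserving linear bijection between two quaternion
algebras forces them to be isomorphic as `k`-algebras. -/
theorem quaternionAlgebra_det_by_norm (k : Type*) [Field k] (hchar : (2 : k) ≠ 0)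
    (a b c d : k) (ha : a ≠ 0) (hb : b ≠ 0) (hc : c ≠ 0) (hd : d ≠ 0)
    (φ : ℍ[k, a, b] ≃ₗ[k] ℍ[k, c, d])
    (hφ : ∀ x : ℍ[k, a, b], quatNorm (φ x) = quatNorm x) :
    Nonempty (ℍ[k, a, b] ≃ₐ[k] ℍ[k, c, d]) :=
  quaternionAlgebra_det_by_norm_general k hchar a b c d ha hb φ hφ
end

section
/- Let p and q be distinct prime numbers with p ≡ 3 (mod 4) and q ≡ 3 (mod 4). Then the quaternion algebras ℍ[ℚ, −1, p] and ℍ[ℚ, −1, q] are not isomorphic as ℚ-algebras. -/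
/-!
If `φ : ℍ[ℚ,-1,p] ≃ₐ ℍ[ℚ,-1,q]`, then `J = φ j` satisfies `J² = p`. Since `p` is not a
rational square, `J` is a pure quaternion, and `J² = p` reads `b² + p = q (c² + d²)` with
`b, c, d ∈ ℚ`. By quadratic reciprocity we may assume `p` is a square mod `q`. As `-1` is not a
square mod `q`, neither is `-p`, so after clearing denominators `q` divides every term of
`x² + p w² = q (y² + z²)`, and infinite descent forces the denominator `w` to vanish.
-/

open Quaternion

namespace QuaternionAlgebra

theorem im_mul_self {R : Type*} [CommRing R] {c₁ c₂ : R} (x : ℍ[R,c₁,c₂]) :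
    (x * x).im = (2 * x.re) • x.im := by
  ext <;> simp <;> ring

theorem re_eq_zero_of_mul_self_eq_coe {K : Type*} [Field K] [NeZero (2 : K)] {c₁ c₂ : K}
    {x : ℍ[K,c₁,c₂]} {r : K} (hr : ¬IsSquare r) (hx : x * x = r) : x.re = 0 := by
  have him : (2 * x.re) • x.im = 0 := by rw [← im_mul_self, hx, im_coe]
  rcases smul_eq_zero.mp him with hre | him
  · exact (mul_eq_zero.mp hre).resolve_left two_ne_zero
  · have hI : x.imI = 0 := by simpa using congrArg imI him
    have hJ : x.imJ = 0 := by simpa using congrArg imJ him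
    have hK : x.imK = 0 := by simpa using congrArg imK him
    have hre : x.re * x.re = r := by simpa [hI, hJ, hK] using congrArg re hx
    exact absurd ⟨x.re, hre.symm⟩ hr

end QuaternionAlgebra

theorem ZMod.eq_zero_of_sq_add_sq_eq_zero {q : ℕ} [Fact q.Prime] (hq : q % 4 = 3)
    {x y : ZMod q} (h : x ^ 2 + y ^ 2 = 0) : y = 0 :=
  by_contra fun hy => mod_four_ne_three_of_sq_eq_neg_sq' hy (eq_neg_of_add_eq_zero_left h) hq

namespace Int

variable {q : ℕ} [Fact q.Prime] {u : ℤ}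

theorem dvd_and_dvd_of_dvd_sq_add_mul_sq (hq : q % 4 = 3) (hu : IsSquare (u : ZMod q))
    (hu0 : (u : ZMod q) ≠ 0) {x y : ℤ} (h : (q : ℤ) ∣ x ^ 2 + u * y ^ 2) :
    (q : ℤ) ∣ x ∧ (q : ℤ) ∣ y := by
  obtain ⟨r, hr⟩ := hu
  simp_rw [← ZMod.intCast_zmod_eq_zero_iff_dvd] at h ⊢
  push_cast at h
  have hxy : (x : ZMod q) ^ 2 + (r * y) ^ 2 = 0 := by rw [← h, hr]; ring
  have hr0 : r ≠ 0 := by rintro rfl; simp at hr; exact hu0 hr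
  have hy := (mul_eq_zero.mp (ZMod.eq_zero_of_sq_add_sq_eq_zero hq hxy)).resolve_left hr0
  exact ⟨by simpa [hy] using h, hy⟩

theorem eq_zero_of_sq_add_mul_sq_eq_mul_sq_add_sq (hq : q % 4 = 3) (hu : IsSquare (u : ZMod q))
    (hu0 : (u : ZMod q) ≠ 0) {x w y z : ℤ} (h : x ^ 2 + u * w ^ 2 = q * (y ^ 2 + z ^ 2)) :
    w = 0 := by
  induction hn : w.natAbs using Nat.strong_induction_on generalizing x w y z with
  | _ n ih =>
    have hq0 : (q : ℤ) ≠ 0 := by exact_mod_cast (Fact.out : q.Prime).ne_zero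
    obtain ⟨⟨x, rfl⟩, ⟨w, rfl⟩⟩ :=
      dvd_and_dvd_of_dvd_sq_add_mul_sq hq hu hu0 (h ▸ dvd_mul_right _ _)
    have hyz : (q : ℤ) * (x ^ 2 + u * w ^ 2) = y ^ 2 + 1 * z ^ 2 := by
      apply mul_left_cancel₀ hq0; linear_combination h
    obtain ⟨⟨y, rfl⟩, ⟨z, rfl⟩⟩ :=
      dvd_and_dvd_of_dvd_sq_add_mul_sq hq ⟨1, by simp⟩ (by simp) (hyz ▸ dvd_mul_right _ _)
    have hsmaller : x ^ 2 + u * w ^ 2 = q * (y ^ 2 + z ^ 2) := by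
      apply mul_left_cancel₀ hq0; linear_combination hyz
    rcases eq_or_ne w 0 with rfl | hw
    · simp
    · refine absurd (ih _ ?_ hsmaller rfl) hw
      rw [← hn, natAbs_mul, natAbs_natCast]
      exact lt_mul_left (natAbs_pos.mpr hw) (Fact.out : q.Prime).one_lt

end Int

theorem Rat.sq_add_ne_mul_sq_add_sq {q : ℕ} [Fact q.Prime] {u : ℤ} (hq : q % 4 = 3)
    (hu : IsSquare (u : ZMod q)) (hu0 : (u : ZMod q) ≠ 0) (x y z : ℚ) :
    x ^ 2 + u ≠ q * (y ^ 2 + z ^ 2) := by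
  intro h
  set N : ℕ := x.den * y.den * z.den
  have hx : ((x.num * (y.den * z.den) : ℤ) : ℚ) = x * N := by
    push_cast [N, ← x.mul_den_eq_num]; ring
  have hy : ((y.num * (x.den * z.den) : ℤ) : ℚ) = y * N := by
    push_cast [N, ← y.mul_den_eq_num]; ring
  have hz : ((z.num * (x.den * y.den) : ℤ) : ℚ) = z * N := by
    push_cast [N, ← z.mul_den_eq_num]; ring
  have hN : (N : ℤ) = 0 := by
    refine Int.eq_zero_of_sq_add_mul_sq_eq_mul_sq_add_sq hq hu hu0 (x := x.num * (y.den * z.den))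
      (y := y.num * (x.den * z.den)) (z := z.num * (x.den * y.den)) ?_
    apply Int.cast_injective (α := ℚ)
    simp only [Int.cast_add, Int.cast_mul, Int.cast_pow, Int.cast_natCast, hx, hy, hz]
    linear_combination (N : ℚ) ^ 2 * h
  simp [N] at hN

theorem QuaternionAlgebra.not_nonempty_algEquiv_neg_one_of_isSquare {p q : ℕ} [Fact q.Prime]
    (hq : q % 4 = 3) (hp : ¬IsSquare (p : ℚ)) (hpq : IsSquare (p : ZMod q))
    (hpq0 : (p : ZMod q) ≠ 0) :
    ¬Nonempty (ℍ[ℚ, -1, (p : ℚ)] ≃ₐ[ℚ] ℍ[ℚ, -1, (q : ℚ)]) := by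
  rintro ⟨φ⟩
  set J := φ (Basis.self ℚ).j
  have hJ : J * J = (p : ℚ) := by
    rw [← map_mul, Basis.j_mul_j, map_smul, map_one]
    ext <;> simp
  have hre := re_eq_zero_of_mul_self_eq_coe hp hJ
  have hpJ : -(J.imI * J.imI) + q * J.imJ * J.imJ + q * J.imK * J.imK = p := by
    simpa [hre] using congrArg re hJ
  refine Rat.sq_add_ne_mul_sq_add_sq (u := p) hq (by exact_mod_cast hpq) (by exact_mod_cast hpq0)
    J.imI J.imJ J.imK ?_
  push_cast
  linear_combination -hpJ

/-- for distinct primes `p ≡ 3 (mod 4)` and `q ≡ 3 (mod 4)`, the quaternion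
algebras `(−1, p / ℚ)` and `(−1, q / ℚ)` are not isomorphic. -/
theorem quaternionAlgebra_neg_one_p_q_not_iso (p q : ℕ)
    (hp : p.Prime) (hq : q.Prime) (hne : p ≠ q)
    (hp4 : p % 4 = 3) (hq4 : q % 4 = 3) :
    ¬ Nonempty (ℍ[ℚ, -1, (p : ℚ)] ≃ₐ[ℚ] ℍ[ℚ, -1, (q : ℚ)]) := by
  have := Fact.mk hp
  have := Fact.mk hq
  have hp' : ¬IsSquare (p : ℚ) := Rat.isSquare_natCast_iff.not.mpr hp.prime.not_isSquare
  have hq' : ¬IsSquare (q : ℚ) := Rat.isSquare_natCast_iff.not.mpr hq.prime.not_isSquare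
  by_cases hpq : IsSquare (p : ZMod q)
  · exact QuaternionAlgebra.not_nonempty_algEquiv_neg_one_of_isSquare hq4 hp' hpq
      (ZMod.prime_ne_zero q p hne.symm)
  · have hqp := (ZMod.exists_sq_eq_prime_iff_of_mod_four_eq_three hp4 hq4 hne).mpr hpq
    exact fun ⟨φ⟩ => QuaternionAlgebra.not_nonempty_algEquiv_neg_one_of_isSquare hp4 hq' hqp
      (ZMod.prime_ne_zero p q hne) ⟨φ.symm⟩
end

section
/- Let p be an odd prime and let u ∈ ℚ_p be a unit (i.e. of p-adic valuation 0) that is not a square in ℚ_p. Then every quaternion algebra ℍ[ℚ_p, a, b] with a, b ∈ ℚ_p nonzero is isomorphic as a ℚ_p-algebra either to the split quaternion algebra ℍ[ℚ_p, 1, 1] or to the division algebra ℍ[ℚ_p, p, u]; i.e. there are exactly two isomorphism classes of quaternion algebras over ℚ_p. -/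
/-!
Over a field, `ℍ[a, b]` only depends on `a` and `b` up to squares, is unchanged when `b` is
multiplied by a norm `α² - aβ²` from `F(√a)`, and is split as soon as `b` is such a norm. For
`p` odd the square classes of `ℚ_p` are represented by `w` and `p w` with `w` a unit, and by
Hensel's lemma every unit is a norm from the unramified extension `ℚ_p(√w)`; these facts bring
every `ℍ[a, b]` to `ℍ[1, 1]` or `ℍ[p, u]`. The algebra `ℍ[p, u]` is a division algebra because
its norm form `(w² - u y²) - p (x² - u z²)` is anisotropic: `‖x² - u y²‖ = max(‖x‖, ‖y‖)²` is an
even power of `p`, so the two brackets have norms of different parity. Since `ℍ[1, 1]` has zero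
divisors, the two algebras are not isomorphic.
-/

open Quaternion

theorem AlgEquiv.nonempty_trans_or {R A B C D : Type*} [CommSemiring R] [Semiring A] [Semiring B]
    [Semiring C] [Semiring D] [Algebra R A] [Algebra R B] [Algebra R C] [Algebra R D]
    (e : A ≃ₐ[R] B) (h : Nonempty (B ≃ₐ[R] C) ∨ Nonempty (B ≃ₐ[R] D)) :
    Nonempty (A ≃ₐ[R] C) ∨ Nonempty (A ≃ₐ[R] D) :=
  h.imp (.map e.trans) (.map e.trans)

namespace QuaternionAlgebra

variable {F : Type*} [Field F]

def basisOfNorm (a b α β c : F) (h : b * (α ^ 2 - a * β ^ 2) = c) : Basis ℍ[F,a,b] a 0 c where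
  i := ⟨0, 1, 0, 0⟩
  j := ⟨0, 0, α, β⟩
  k := ⟨0, 0, a * β, α⟩
  i_mul_i := by ext <;> simp
  j_mul_j := by subst h; ext <;> simp <;> ring
  i_mul_j := by ext <;> simp
  j_mul_i := by ext <;> simp

def equivOfNorm (a b α β c : F) (h : b * (α ^ 2 - a * β ^ 2) = c)
    (hn : α ^ 2 - a * β ^ 2 ≠ 0) : ℍ[F,a,c] ≃ₐ[F] ℍ[F,a,b] :=
  AlgEquiv.ofAlgHom (basisOfNorm a b α β c h).liftHom
    (basisOfNorm a c (α / (α ^ 2 - a * β ^ 2)) (-β / (α ^ 2 - a * β ^ 2)) b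
      (by rw [← h]; field_simp)).liftHom
    (by apply hom_ext <;> ext <;> simp [basisOfNorm, Basis.liftHom, Basis.lift] <;> field_simp <;>
      try ring)
    (by apply hom_ext <;> ext <;> simp [basisOfNorm, Basis.liftHom, Basis.lift] <;> field_simp <;>
      try ring)

def equivOfMulSqRight (a b t : F) (ht : t ≠ 0) : ℍ[F,a,b * t ^ 2] ≃ₐ[F] ℍ[F,a,b] :=
  equivOfNorm a b t 0 (b * t ^ 2) (by ring) (by simpa using ht)

def equivOfMulSqLeft (a b s : F) (hs : s ≠ 0) : ℍ[F,a * s ^ 2,b] ≃ₐ[F] ℍ[F,a,b] :=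
  (swapEquiv _ _).trans ((equivOfMulSqRight b a s hs).trans (swapEquiv _ _))

def equivNegMul (a b : F) (ha : a ≠ 0) : ℍ[F,-(a * b),a] ≃ₐ[F] ℍ[F,a,b] :=
  (swapEquiv _ _).trans (equivOfNorm a b 0 1 (-(a * b)) (by ring) (by simpa using ha))

/-- `ℍ[F,a,b] ≃ ℍ[F,a,1] ≃ ℍ[F,1,a]`, and `a = ((a + 1) / 2)² - ((a - 1) / 2)²` is a norm
from `F(√1)`. -/
def equivOneOneOfEqNorm {a b α β : F} (h : α ^ 2 - a * β ^ 2 = b) (ha : a ≠ 0) (hb : b ≠ 0)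
    (h2 : (2 : F) ≠ 0) : ℍ[F,a,b] ≃ₐ[F] ℍ[F,1,1] :=
  (equivOfNorm a 1 α β b (by rw [one_mul, h]) (h ▸ hb)).trans <| (swapEquiv _ _).trans <|
    equivOfNorm 1 1 ((a + 1) / 2) ((a - 1) / 2) a (by field_simp; ring)
      (by convert ha using 1; field_simp; ring)

def equivOneOneOfIsSquare {s b : F} (hs : s ≠ 0) (hb : b ≠ 0) (h2 : (2 : F) ≠ 0) :
    ℍ[F,s * s,b] ≃ₐ[F] ℍ[F,1,1] :=
  equivOneOneOfEqNorm (α := (b + 1) / 2) (β := (b - 1) / (2 * s)) (by field_simp; ring)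
    (mul_ne_zero hs hs) hb h2

theorem noZeroDivisors_of_forall_re_star_mul_self_eq_zero {c₁ c₂ c₃ : F}
    (h : ∀ q : ℍ[F,c₁,c₂,c₃], (star q * q).re = 0 → q = 0) : NoZeroDivisors ℍ[F,c₁,c₂,c₃] where
  eq_zero_or_eq_zero_of_mul_eq_zero {q r} hqr := by
    refine or_iff_not_imp_left.mpr fun hq => ?_
    have hN : (star q * q).re • r = 0 := by
      rw [← coe_mul_eq_smul, ← star_mul_eq_coe, mul_assoc, hqr, mul_zero]
    exact (smul_eq_zero.mp hN).resolve_left (mt (h q) hq)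

theorem not_noZeroDivisors_one_left (c₃ : F) : ¬NoZeroDivisors ℍ[F,1,c₃] := by
  intro _
  have h : (⟨1, 1, 0, 0⟩ * ⟨1, -1, 0, 0⟩ : ℍ[F,1,c₃]) = 0 := by ext <;> simp
  rcases mul_eq_zero.mp h with h | h <;> simpa using congrArg re h

end QuaternionAlgebra

namespace PadicInt

variable {p : ℕ} [Fact p.Prime]

theorem toZMod_eq_zero_iff {z : ℤ_[p]} : toZMod z = 0 ↔ ¬IsUnit z := by
  rw [← RingHom.mem_ker, ker_toZMod, IsLocalRing.mem_maximalIdeal, mem_nonunits_iff]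

theorem toZMod_ne_zero_iff {z : ℤ_[p]} : toZMod z ≠ 0 ↔ IsUnit z := by
  rw [Ne, toZMod_eq_zero_iff, not_not]

theorem isSquare_of_toZMod_eq_sq (hp : p ≠ 2) {z t : ℤ_[p]} (ht : IsUnit t)
    (h : toZMod z = toZMod t ^ 2) : IsSquare z := by
  have htwo : ‖(2 : ℤ_[p])‖ = 1 := by
    rw [← isUnit_iff, ← toZMod_ne_zero_iff, map_ofNat]
    exact Ring.two_ne_zero (by rwa [ZMod.ringChar_zmod_n])
  have hval : ‖t ^ 2 - z‖ < 1 := by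
    rw [← not_isUnit_iff, ← toZMod_eq_zero_iff, map_sub, map_pow, h, sub_self]
  obtain ⟨y, hy, -⟩ := hensels_lemma (F := Polynomial.X ^ 2 - Polynomial.C z) (a := t) (by
    simpa [one_add_one_eq_two, htwo, isUnit_iff.mp ht] using hval)
  exact ⟨y, by simpa [sub_eq_zero, sq, eq_comm] using hy⟩

theorem isSquare_of_isSquare_toZMod (hp : p ≠ 2) {z : ℤ_[p]} (hz : IsUnit z)
    (h : IsSquare (toZMod z)) : IsSquare z := by
  obtain ⟨s, hs⟩ := h
  obtain ⟨t, rfl⟩ := ZMod.ringHom_surjective (toZMod : ℤ_[p] →+* ZMod p) s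
  have ht : toZMod t ≠ 0 := fun ht => toZMod_ne_zero_iff.mpr hz (by rw [hs, ht, mul_zero])
  exact isSquare_of_toZMod_eq_sq hp (toZMod_ne_zero_iff.mp ht) (hs.trans (sq _).symm)

theorem not_isSquare_toZMod (hp : p ≠ 2) {u : ℤ_[p]} (hu : IsUnit u) (h : ¬IsSquare u) :
    ¬IsSquare (toZMod u) :=
  mt (isSquare_of_isSquare_toZMod hp hu) h

/-- Solve `x² - a y² = b` modulo `p` by counting, then lift by Hensel's lemma in whichever of
`x`, `y` is a unit. -/
theorem exists_sq_sub_mul_sq_eq (hp : p ≠ 2) {a b : ℤ_[p]} (ha : IsUnit a) (hb : IsUnit b) :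
    ∃ α β : ℤ_[p], α ^ 2 - a * β ^ 2 = b := by
  open Polynomial in
  obtain ⟨x, y, hxy⟩ := FiniteField.exists_root_sum_quadratic
    (f := X ^ 2 - C (toZMod b)) (g := C (-toZMod a) * X ^ 2)
    (degree_X_pow_sub_C two_pos _)
    (degree_C_mul_X_pow 2 (neg_ne_zero.mpr (toZMod_ne_zero_iff.mpr ha)))
    (by rw [ZMod.card]; exact Nat.odd_iff.mp ((Fact.out : p.Prime).odd_of_ne_two hp))
  obtain ⟨ξ, rfl⟩ := ZMod.ringHom_surjective (toZMod : ℤ_[p] →+* ZMod p) x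
  obtain ⟨η, rfl⟩ := ZMod.ringHom_surjective (toZMod : ℤ_[p] →+* ZMod p) y
  replace hxy : toZMod ξ ^ 2 - toZMod a * toZMod η ^ 2 = toZMod b := by
    simp only [Polynomial.eval_sub, Polynomial.eval_pow, Polynomial.eval_X, Polynomial.eval_C,
      Polynomial.eval_mul] at hxy
    linear_combination hxy
  obtain ⟨a', haa'⟩ := ha.exists_right_inv
  have haa'' : toZMod a * toZMod a' = 1 := by rw [← map_mul, haa', map_one]
  have hξη : toZMod ξ ≠ 0 ∨ toZMod η ≠ 0 := by
    by_contra! h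
    rw [h.1, h.2] at hxy
    exact toZMod_ne_zero_iff.mpr hb (by rw [← hxy]; ring)
  rcases hξη with hξ | hη
  · obtain ⟨α, hα⟩ := isSquare_of_toZMod_eq_sq hp (z := b + a * η ^ 2)
      (toZMod_ne_zero_iff.mp hξ) (by simp only [map_add, map_mul, map_pow]; linear_combination -hxy)
    exact ⟨α, η, by linear_combination -hα⟩
  · obtain ⟨β, hβ⟩ := isSquare_of_toZMod_eq_sq hp (z := a' * (ξ ^ 2 - b))
      (toZMod_ne_zero_iff.mp hη) (by
        simp only [map_sub, map_mul, map_pow]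
        linear_combination toZMod a' * hxy + toZMod η ^ 2 * haa'')
    exact ⟨ξ, β, by linear_combination a * hβ - (ξ ^ 2 - b) * haa'⟩

theorem isSquare_mul_of_not_isSquare (hp : p ≠ 2) {a b : ℤ_[p]} (ha : IsUnit a) (hb : IsUnit b)
    (ha' : ¬IsSquare a) (hb' : ¬IsSquare b) : IsSquare (a * b) := by
  refine isSquare_of_isSquare_toZMod hp (ha.mul hb) ?_
  rw [map_mul, ← quadraticChar_one_iff_isSquare (mul_ne_zero (toZMod_ne_zero_iff.mpr ha)
    (toZMod_ne_zero_iff.mpr hb)), map_mul,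
    quadraticChar_neg_one_iff_not_isSquare.mpr (not_isSquare_toZMod hp ha ha'),
    quadraticChar_neg_one_iff_not_isSquare.mpr (not_isSquare_toZMod hp hb hb')]
  norm_num

theorem isUnit_sq_sub_of_not_isSquare (hp : p ≠ 2) {u : ℤ_[p]} (hu : IsUnit u)
    (h : ¬IsSquare u) (t : ℤ_[p]) : IsUnit (t ^ 2 - u) := by
  rw [← toZMod_ne_zero_iff, map_sub, map_pow, sub_ne_zero]
  exact fun ht => not_isSquare_toZMod hp hu h ⟨toZMod t, by rw [← ht, sq]⟩

end PadicInt

namespace Padic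

open PadicInt QuaternionAlgebra

variable {p : ℕ} [Fact p.Prime]

theorem natCast_p_ne_zero : (p : ℚ_[p]) ≠ 0 := mod_cast (Fact.out : p.Prime).ne_zero

theorem exists_norm_eq_one_mul_sq {c : ℚ_[p]} (hc : c ≠ 0) :
    ∃ w s : ℚ_[p], ‖w‖ = 1 ∧ s ≠ 0 ∧ (c = w * s ^ 2 ∨ c = p * w * s ^ 2) := by
  have hw : ‖c / (p : ℚ_[p]) ^ c.valuation‖ = 1 := by
    rw [norm_div, norm_zpow, norm_p, norm_eq_zpow_neg_valuation hc, inv_zpow',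
      div_self (zpow_ne_zero _ (by exact_mod_cast (Fact.out : p.Prime).ne_zero))]
  have hp0 := natCast_p_ne_zero (p := p)
  obtain ⟨m, hm | hm⟩ := Int.even_or_odd' c.valuation
  · refine ⟨c / p ^ c.valuation, p ^ m, hw, zpow_ne_zero _ hp0, .inl ?_⟩
    rw [hm, ← zpow_natCast, ← zpow_mul]
    field_simp
    ring_nf
  · refine ⟨c / p ^ c.valuation, p ^ m, hw, zpow_ne_zero _ hp0, .inr ?_⟩
    rw [hm, ← zpow_natCast, ← zpow_mul, zpow_add_one₀ hp0]
    field_simp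
    ring_nf

theorem eq_zero_of_norm_sq_eq_norm_p_mul_norm_sq {c d : ℚ_[p]}
    (h : ‖c‖ ^ 2 = ‖(p : ℚ_[p])‖ * ‖d‖ ^ 2) : c = 0 := by
  by_contra hc
  have hd : d ≠ 0 := by
    rintro rfl
    simp [hc] at h
  rw [← norm_pow, ← norm_pow, ← norm_mul, norm_eq_zpow_neg_valuation (pow_ne_zero 2 hc),
    norm_eq_zpow_neg_valuation (mul_ne_zero natCast_p_ne_zero (pow_ne_zero 2 hd)),
    zpow_right_inj₀ (by exact_mod_cast (Fact.out : p.Prime).pos)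
      (by exact_mod_cast (Fact.out : p.Prime).one_lt.ne'),
    valuation_mul natCast_p_ne_zero (pow_ne_zero 2 hd), valuation_pow, valuation_pow,
    valuation_p] at h
  omega

theorem exists_sq_sub_mul_sq_eq (hp : p ≠ 2) {a b : ℚ_[p]} (ha : ‖a‖ = 1) (hb : ‖b‖ = 1) :
    ∃ α β : ℚ_[p], α ^ 2 - a * β ^ 2 = b := by
  obtain ⟨α, β, h⟩ :=
    PadicInt.exists_sq_sub_mul_sq_eq hp (mkUnits ha).isUnit (mkUnits hb).isUnit
  exact ⟨α, β, by rw [← mkUnits_eq ha, ← mkUnits_eq hb, ← h]; push_cast; rfl⟩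

theorem not_isSquare_mkUnits {u : ℚ_[p]} (hu : ‖u‖ = 1) (h : ¬IsSquare u) :
    ¬IsSquare (mkUnits hu : ℤ_[p]) :=
  fun ⟨r, hr⟩ => h ⟨r, by rw [← mkUnits_eq hu, hr]; push_cast; rfl⟩

theorem exists_eq_mul_sq_of_not_isSquare (hp : p ≠ 2) {a u : ℚ_[p]} (ha : ‖a‖ = 1)
    (hu : ‖u‖ = 1) (ha' : ¬IsSquare a) (hu' : ¬IsSquare u) : ∃ s ≠ 0, a = u * s ^ 2 := by
  obtain ⟨t, ht⟩ := isSquare_mul_of_not_isSquare hp (mkUnits ha).isUnit (mkUnits hu).isUnit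
    (not_isSquare_mkUnits ha ha') (not_isSquare_mkUnits hu hu')
  have hu0 : u ≠ 0 := norm_ne_zero_iff.mp (by simp [hu])
  have ha0 : a ≠ 0 := norm_ne_zero_iff.mp (by simp [ha])
  have ht' : a * u = t * t := by
    rw [← mkUnits_eq ha, ← mkUnits_eq hu, ← PadicInt.coe_mul, ht, PadicInt.coe_mul]
  refine ⟨t / u, div_ne_zero (fun h0 => mul_ne_zero ha0 hu0 (by rw [ht', h0, mul_zero])) hu0, ?_⟩
  field_simp
  linear_combination ht'

theorem norm_sq_sub_mul_sq (hp : p ≠ 2) {u : ℚ_[p]} (hu : ‖u‖ = 1) (hu' : ¬IsSquare u)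
    (x y : ℚ_[p]) : ‖x ^ 2 - u * y ^ 2‖ = max ‖x‖ ‖y‖ ^ 2 := by
  rcases le_or_gt ‖x‖ ‖y‖ with hxy | hxy
  · have ht : ‖x / y‖ ≤ 1 := by
      rw [norm_div]; exact div_le_one_of_le₀ hxy (norm_nonneg _)
    have h1 : ‖(x / y) ^ 2 - u‖ = 1 := by
      have := isUnit_sq_sub_of_not_isSquare hp (mkUnits hu).isUnit (not_isSquare_mkUnits hu hu')
        ⟨x / y, ht⟩
      rw [isUnit_iff, norm_def] at this
      rw [← this]; push_cast; rfl
    have hx : x = x / y * y := (div_mul_cancel_of_imp fun hy => by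
      rwa [hy, norm_zero, norm_le_zero_iff] at hxy).symm
    rw [max_eq_right hxy, hx, show (x / y * y) ^ 2 - u * y ^ 2 = ((x / y) ^ 2 - u) * y ^ 2 by ring,
      norm_mul, h1, norm_pow, one_mul]
  · have hlt : ‖-(u * y ^ 2)‖ < ‖x ^ 2‖ := by
      rw [norm_neg, norm_mul, hu, one_mul, norm_pow, norm_pow]
      exact pow_lt_pow_left₀ hxy (norm_nonneg _) two_ne_zero
    rw [sub_eq_add_neg, IsUltrametricDist.norm_add_eq_max_of_norm_ne_norm hlt.ne',
      max_eq_left hlt.le, max_eq_left hxy.le, norm_pow]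

theorem eq_zero_of_sq_sub_p_mul_sq_sub_mul_sq_add_eq_zero (hp : p ≠ 2) {u : ℚ_[p]} (hu : ‖u‖ = 1)
    (hu' : ¬IsSquare u) {w x y z : ℚ_[p]}
    (h : w ^ 2 - p * x ^ 2 - u * y ^ 2 + p * u * z ^ 2 = 0) : w = 0 ∧ x = 0 ∧ y = 0 ∧ z = 0 := by
  have key : max ‖w‖ ‖y‖ ^ 2 = ‖(p : ℚ_[p])‖ * max ‖x‖ ‖z‖ ^ 2 := by
    rw [← norm_sq_sub_mul_sq hp hu hu', ← norm_sq_sub_mul_sq hp hu hu', ← norm_mul]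
    congr 1
    linear_combination h
  have hwy : max ‖w‖ ‖y‖ = 0 := by
    obtain ⟨c, hc⟩ : ∃ c, ‖c‖ = max ‖w‖ ‖y‖ :=
      (max_choice ‖w‖ ‖y‖).elim (⟨w, ·.symm⟩) (⟨y, ·.symm⟩)
    obtain ⟨d, hd⟩ : ∃ d, ‖d‖ = max ‖x‖ ‖z‖ :=
      (max_choice ‖x‖ ‖z‖).elim (⟨x, ·.symm⟩) (⟨z, ·.symm⟩)
    rw [← hc, ← hd] at key
    rw [← hc, eq_zero_of_norm_sq_eq_norm_p_mul_norm_sq key, norm_zero]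
  have hxz : max ‖x‖ ‖z‖ = 0 := by
    rw [hwy, zero_pow two_ne_zero, eq_comm, mul_eq_zero, norm_eq_zero] at key
    exact (pow_eq_zero_iff two_ne_zero).mp (key.resolve_left natCast_p_ne_zero)
  obtain ⟨hw, hy⟩ := max_le_iff.mp hwy.le
  obtain ⟨hx, hz⟩ := max_le_iff.mp hxz.le
  exact ⟨norm_le_zero_iff.mp hw, norm_le_zero_iff.mp hx, norm_le_zero_iff.mp hy,
    norm_le_zero_iff.mp hz⟩

theorem noZeroDivisors_quaternionAlgebra_p (hp : p ≠ 2) {u : ℚ_[p]} (hu : ‖u‖ = 1)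
    (hu' : ¬IsSquare u) : NoZeroDivisors ℍ[ℚ_[p],(p : ℚ_[p]),u] :=
  noZeroDivisors_of_forall_re_star_mul_self_eq_zero fun q hq => by
    obtain ⟨hw, hx, hy, hz⟩ := eq_zero_of_sq_sub_p_mul_sq_sub_mul_sq_add_eq_zero hp hu hu'
      (w := q.re) (x := q.imI) (y := q.imJ) (z := q.imK) (by simp at hq; linear_combination hq)
    ext <;> assumption

theorem nonempty_algEquiv_one_one_of_norm_eq_one (hp : p ≠ 2) {w z : ℚ_[p]} (hw : ‖w‖ = 1)
    (hz : ‖z‖ = 1) : Nonempty (ℍ[ℚ_[p],w,z] ≃ₐ[ℚ_[p]] ℍ[ℚ_[p],1,1]) :=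
  have ⟨_, _, h⟩ := exists_sq_sub_mul_sq_eq hp hw hz
  ⟨equivOneOneOfEqNorm h (norm_ne_zero_iff.mp (by simp [hw]))
    (norm_ne_zero_iff.mp (by simp [hz])) two_ne_zero⟩

theorem nonempty_algEquiv_one_one_or_p_of_unit_of_p_mul_unit (hp : p ≠ 2) {u w z : ℚ_[p]}
    (hu : ‖u‖ = 1) (hu' : ¬IsSquare u) (hw : ‖w‖ = 1) (hz : ‖z‖ = 1) :
    Nonempty (ℍ[ℚ_[p],w,p * z] ≃ₐ[ℚ_[p]] ℍ[ℚ_[p],1,1]) ∨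
      Nonempty (ℍ[ℚ_[p],w,p * z] ≃ₐ[ℚ_[p]] ℍ[ℚ_[p],(p : ℚ_[p]),u]) := by
  have hz0 : z ≠ 0 := norm_ne_zero_iff.mp (by simp [hz])
  by_cases hsq : IsSquare w
  · obtain ⟨s, rfl⟩ := hsq
    have hs : s ≠ 0 := by rintro rfl; simp at hw
    exact .inl ⟨equivOneOneOfIsSquare hs (mul_ne_zero natCast_p_ne_zero hz0) two_ne_zero⟩
  · obtain ⟨s, hs, rfl⟩ := exists_eq_mul_sq_of_not_isSquare hp hw hu hsq hu'
    obtain ⟨α, β, h⟩ := exists_sq_sub_mul_sq_eq hp hu hz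
    exact .inr ⟨(equivOfMulSqLeft _ _ s hs).trans <|
      (equivOfNorm u p α β (p * z) (by rw [h]) (h ▸ hz0)).trans (swapEquiv _ _)⟩

theorem nonempty_algEquiv_one_one_or_p (hp : p ≠ 2) {u : ℚ_[p]} (hu : ‖u‖ = 1)
    (hu' : ¬IsSquare u) {a b : ℚ_[p]} (ha : a ≠ 0) (hb : b ≠ 0) :
    Nonempty (ℍ[ℚ_[p],a,b] ≃ₐ[ℚ_[p]] ℍ[ℚ_[p],1,1]) ∨
      Nonempty (ℍ[ℚ_[p],a,b] ≃ₐ[ℚ_[p]] ℍ[ℚ_[p],(p : ℚ_[p]),u]) := by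
  obtain ⟨w, s, hw, hs, rfl | rfl⟩ := exists_norm_eq_one_mul_sq ha <;>
  obtain ⟨z, t, hz, ht, rfl | rfl⟩ := exists_norm_eq_one_mul_sq hb <;>
  refine ((equivOfMulSqRight _ _ t ht).trans (equivOfMulSqLeft _ _ s hs)).nonempty_trans_or ?_
  · exact .inl (nonempty_algEquiv_one_one_of_norm_eq_one hp hw hz)
  · exact nonempty_algEquiv_one_one_or_p_of_unit_of_p_mul_unit hp hu hu' hw hz
  · exact (swapEquiv _ _).nonempty_trans_or
      (nonempty_algEquiv_one_one_or_p_of_unit_of_p_mul_unit hp hu hu' hz hw)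
  · have hpw : (p : ℚ_[p]) * w ≠ 0 :=
      mul_ne_zero natCast_p_ne_zero (norm_ne_zero_iff.mp (by simp [hw]))
    refine (equivNegMul _ _ hpw).symm.nonempty_trans_or ?_
    rw [show -(p * w * (p * z)) = -(w * z) * p ^ 2 by ring]
    exact (equivOfMulSqLeft _ _ _ natCast_p_ne_zero).nonempty_trans_or
      (nonempty_algEquiv_one_one_or_p_of_unit_of_p_mul_unit hp hu hu' (by simp [hw, hz]) hw)

end Padic

/-- for `p` an odd prime and `u` a non-square unit of `ℚ_p`, every quaternion
algebra over `ℚ_p` is isomorphic either to the split algebra `ℍ[ℚ_p, 1, 1]` or to the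
division algebra `ℍ[ℚ_p, p, u]`, and these two are not isomorphic: there are exactly two
isomorphism classes of quaternion algebras over `ℚ_p`. -/
theorem padic_quaternionAlgebra_two_classes (p : ℕ) [Fact p.Prime] (hodd : p ≠ 2)
    (u : ℚ_[p]) (hu0 : u ≠ 0) (huval : u.valuation = 0) (hunsq : ¬ ∃ y : ℚ_[p], y ^ 2 = u) :
    (∀ a b : ℚ_[p], a ≠ 0 → b ≠ 0 →
      Nonempty (ℍ[ℚ_[p], a, b] ≃ₐ[ℚ_[p]] ℍ[ℚ_[p], 1, 1]) ∨
      Nonempty (ℍ[ℚ_[p], a, b] ≃ₐ[ℚ_[p]] ℍ[ℚ_[p], (p : ℚ_[p]), u])) ∧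
    ¬ Nonempty (ℍ[ℚ_[p], 1, 1] ≃ₐ[ℚ_[p]] ℍ[ℚ_[p], (p : ℚ_[p]), u]) := by
  have hu : ‖u‖ = 1 := by rw [Padic.norm_eq_zpow_neg_valuation hu0, huval, neg_zero, zpow_zero]
  have hu' : ¬IsSquare u := fun ⟨y, hy⟩ => hunsq ⟨y, by rw [hy, sq]⟩
  refine ⟨fun a b ha hb => Padic.nonempty_algEquiv_one_one_or_p hodd hu hu' ha hb, ?_⟩
  rintro ⟨e⟩
  have := Padic.noZeroDivisors_quaternionAlgebra_p hodd hu hu'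
  exact QuaternionAlgebra.not_noZeroDivisors_one_left _ (MulEquiv.noZeroDivisors _ e.toMulEquiv)
end

section
/- Let k be a field of characteristic 0 and let w ∈ A satisfy w∘w = w for the Jordan product on the Tits triple algebra, with w ≠ 0 and w ≠ e. Then Tr(w) = 1 or Tr(w) = 2. -/
open Matrix

noncomputable section

variable {k : Type*} [Field k]

lemma TitsA.adj_double (A : Matrix (Fin 3) (Fin 3) k) : adjugate (A+A) = (4:k) • adjugate A := by
  rw [← two_smul k A, adjugate_smul]; norm_num

lemma TitsA.mul_double (A B : Matrix (Fin 3) (Fin 3) k) : (A+A)*(B+B) = (4:k) • (A*B) := by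
  rw [← two_smul k A, ← two_smul k B, smul_mul_assoc, mul_smul_comm, smul_smul]; norm_num

lemma TitsA.ch3 (A : Matrix (Fin 3) (Fin 3) k) :
    adjugate A = A*A - A.trace • A + (adjugate A).trace • 1 := by
  ext i j
  fin_cases i <;> fin_cases j <;>
    simp [adjugate_fin_three, trace_fin_three, Matrix.mul_apply, Fin.sum_univ_three,
      Matrix.one_apply] <;> ring

lemma TitsA.smul_one_inj {x y : k} (h : x • (1 : Matrix (Fin 3) (Fin 3) k) = y • 1) :
    x = y := by
  have := congrFun (congrFun h 0) 0
  simpa using this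

/-- over a field of characteristic 0, any idempotent of the Jordan product on
the Tits triple algebra other than `0` and `e` has trace 1 or 2. -/
theorem TitsA.trace_of_idempotent (k : Type*) [Field k] [CharZero k]
    (w : TitsA k) (hw : TitsA.jmul w w = w) (h0 : w ≠ 0) (he : w ≠ TitsA.e) :
    TitsA.Tr w = 1 ∨ TitsA.Tr w = 2 := by
  obtain ⟨a, b, c⟩ := w
  show a.trace = 1 ∨ a.trace = 2
  by_contra hcon
  push_neg at hcon
  obtain ⟨ht1, ht2⟩ := hcon
  simp only [TitsA.jmul, TitsA.sharpBil, TitsA.sharp, TitsA.Tr, TitsA.Sr, TitsA.e,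
    Prod.mk_add_mk, Prod.smul_mk, Prod.mk_sub_mk, Prod.mk.injEq, smul_zero, TitsA.adj_double,
    TitsA.mul_double, trace_sub, trace_smul, smul_eq_mul, sub_zero] at hw
  obtain ⟨h1, h2, h3⟩ := hw
  set t := a.trace with hts
  set s := (adjugate a).trace with hss
  set u := (b*c).trace with hus
  have E1 : adjugate a = b*c + (1 - t) • a + (s - u) • (1 : Matrix (Fin 3) (Fin 3) k) := by
    linear_combination (norm := module) h1
  have E2 : adjugate c = a*b + (1 - t) • b := by
    linear_combination (norm := module) h2
  have E3 : adjugate b = c*a + (1 - t) • c := by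
    linear_combination (norm := module) h3
  -- scalar relation from trace of E1
  have hS : t * t - t = 2 * (s - u) := by
    have := congrArg Matrix.trace E1
    simp only [trace_add, trace_smul, trace_one, Fintype.card_fin, Nat.cast_ofNat,
      smul_eq_mul, ← hss, ← hus, ← hts] at this
    linear_combination this
  have hCH := TitsA.ch3 a
  -- multiply E1 by a on the left, E2 by c on the right
  have hDa : (det a) • (1 : Matrix (Fin 3) (Fin 3) k)
      = a*(b*c) + (1 - t) • (a*a) + (s-u) • a := by
    calc (det a) • (1 : Matrix (Fin 3) (Fin 3) k) = a * adjugate a := (mul_adjugate a).symm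
    _ = a * (b*c + (1 - t) • a + (s - u) • 1) := by rw [← E1]
    _ = a*(b*c) + (1 - t) • (a*a) + (s-u) • a := by
        rw [mul_add, mul_add, mul_smul_comm, mul_smul_comm, mul_one]
  have hDc : (det c) • (1 : Matrix (Fin 3) (Fin 3) k) = a*(b*c) + (1 - t) • (b*c) := by
    calc (det c) • (1 : Matrix (Fin 3) (Fin 3) k) = adjugate c * c := (adjugate_mul c).symm
    _ = (a*b + (1 - t) • b) * c := by rw [← E2]
    _ = a*(b*c) + (1 - t) • (b*c) := by rw [add_mul, smul_mul_assoc, mul_assoc]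
  have hbc : b*c = a*a - t•a + s•(1 : Matrix (Fin 3) (Fin 3) k) - (1-t)•a - (s-u)•1 := by
    linear_combination (norm := module) hCH - E1
  set κ := (s-u) + (1-t)*t + (1-t)*(1-t) with hκdef
  set Δ := det a - det c + (1-t)*u with hΔdef
  have key : κ • a = Δ • (1 : Matrix (Fin 3) (Fin 3) k) := by
    rw [hκdef, hΔdef]
    linear_combination (norm := module) hDc - hDa + (1-t) • hbc
  have hκ : κ ≠ 0 := by
    intro h
    have h12 : (t - 1) * (t - 2) = 0 := by
      rw [hκdef] at h
      linear_combination 2 * h + hS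
    rcases mul_eq_zero.mp h12 with h' | h'
    · exact ht1 (by linear_combination h')
    · exact ht2 (by linear_combination h')
  set μ := κ⁻¹ * Δ with hμdef
  have ha : a = μ • (1 : Matrix (Fin 3) (Fin 3) k) := by
    rw [hμdef, ← smul_smul, ← key, smul_smul, inv_mul_cancel₀ hκ, one_smul]
  have htμ : t = 3*μ := by
    rw [hts, ha]
    simp [trace_smul, trace_one, smul_eq_mul]
    ring
  have hadj : adjugate a = (μ^2) • (1 : Matrix (Fin 3) (Fin 3) k) := by
    rw [ha, adjugate_smul, adjugate_one]
    norm_num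
  set lam := μ^2 - (1-t)*μ - (s-u) with hlamdef
  have hbc2 : b*c = lam • (1 : Matrix (Fin 3) (Fin 3) k) := by
    have E1' := E1
    rw [hadj, ha] at E1'
    rw [hlamdef]
    linear_combination (norm := module) -E1'
  have hlam : 2*lam = μ - μ^2 := by
    rw [hlamdef]
    linear_combination (1 - t - μ) * htμ + hS
  have hE2' : adjugate c = (1-2*μ) • b := by
    rw [E2, ha, htμ, smul_mul_assoc, one_mul]
    module
  have hE3' : adjugate b = (1-2*μ) • c := by
    rw [E3, ha, htμ, mul_smul_comm, mul_one]
    module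
  have hdb : det b = (1-2*μ) * lam := by
    apply TitsA.smul_one_inj (k := k)
    calc (det b) • (1 : Matrix (Fin 3) (Fin 3) k) = b * adjugate b := (mul_adjugate b).symm
    _ = (1-2*μ) • (b * c) := by rw [hE3', mul_smul_comm]
    _ = ((1-2*μ) * lam) • 1 := by rw [hbc2, smul_smul]
  have hdc : det c = (1-2*μ) * lam := by
    apply TitsA.smul_one_inj (k := k)
    calc (det c) • (1 : Matrix (Fin 3) (Fin 3) k) = adjugate c * c := (adjugate_mul c).symm
    _ = (1-2*μ) • (b * c) := by rw [hE2', smul_mul_assoc]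
    _ = ((1-2*μ) * lam) • 1 := by rw [hbc2, smul_smul]
  by_cases hl : lam = 0
  · -- degenerate case : w = 0 or w = e
    have hμ01 : μ * (1 - μ) = 0 := by linear_combination 2*hl - hlam
    have hcard : Fintype.card (Fin 3) ≠ 1 := by simp
    have h4 := adjugate_adjugate b hcard
    rw [hE3', adjugate_smul, hE2', hdb, hl] at h4
    rcases mul_eq_zero.mp hμ01 with hμ0 | hμ0
    · rw [hμ0] at h4
      norm_num at h4
      -- h4 : b = 0  (hopefully)
      have hb : b = 0 := h4
      have hc : c = 0 := by
        rw [hb, adjugate_zero, hμ0] at hE3'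
        simpa using hE3'.symm
      exact h0 (by rw [ha, hμ0, hb, hc]; simp [Prod.ext_iff])
    · have hμ1 : μ = 1 := by linear_combination -hμ0
      rw [hμ1] at h4
      norm_num at h4
      have hb : b = 0 := h4
      have hc : c = 0 := by
        rw [hb, adjugate_zero, hμ1] at hE3'
        have := hE3'.symm
        norm_num at this
        exact this
      exact he (by rw [ha, hμ1, hb, hc]; simp [TitsA.e, Prod.ext_iff])
  · -- main case : contradiction with t ∉ {1,2}
    have hdetbc : det b * det c = lam^3 := by
      rw [← det_mul, hbc2, det_smul, det_one, Fintype.card_fin, mul_one]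
    have hsq : (1-2*μ)^2 = lam := by
      apply mul_left_cancel₀ (pow_ne_zero 2 hl)
      linear_combination hdetbc - det c * hdb - ((1-2*μ)*lam) * hdc
    have h9 : (3*μ-1)*(3*μ-2) = 0 := by linear_combination 2*hsq + hlam
    rcases mul_eq_zero.mp h9 with h' | h'
    · exact ht1 (by linear_combination htμ + h')
    · exact ht2 (by linear_combination htμ + h')
end
end
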